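/- (Throughput of the myopic policy for two channels, case p11 ≥ p01.) Let 0 ≤ p01 ≤ p11 < 1, let p10 = 1 − p11, and write p01^{(m)} for the (0,1) entry of the m-th power of the 2×2 transition matrix with rows (1−p01, p01) and (1−p11, p11). Consider the Markov chain on the positive integers (transmission-period lengths) with transition probabilities r_{i,1} = 1 − p01^{(i+1)} and r_{i,j} = p01^{(i+1)}·p11^{j−2}·p10 for j ≥ 2. Define ω̄ = p01^{(2)}/(1 + p01^{(2)} − A), where p01^{(2)} = p00·p01 + p01·p11 and A = [p01/(1 + p01 − p11)]·(1 − (p11 − p01)³·(1 − p11)/(1 − p11² + p11·p01)). Then the sequence λ given by λ_1 = 1 − ω̄ and λ_k = ω̄·p11^{k−2}·p10 for k ≥ 2 is a probability distribution (λ_k ≥ 0 and Σ_k λ_k = 1) satisfying the stationarity equations Σ_i λ_i·r_{i,j} = λ_j for every j ≥ 1; moreover its mean satisfies Σ_k k·λ_k = 1 + ω̄/(1 − p11), and consequently the steady-state throughput U = 1 − 1/(Σ_k k·λ_k) equals 1 − (1 − p11)/(1 + ω̄ − p11). -/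

import Mathlib

lemma pow_entry_myopic (p01 p11 d pi1 : ℝ) (hd : d = p11 - p01) (hpi : pi1 * (1 - d) = p01) :
    ∀ m : ℕ, (!![1 - p01, p01; 1 - p11, p11] ^ (m+1) : Matrix (Fin 2) (Fin 2) ℝ) =
      !![1 - pi1*(1-d^(m+1)), pi1*(1-d^(m+1));
         1 - pi1*(1-d^(m+1)) - d^(m+1), pi1*(1-d^(m+1)) + d^(m+1)] := by
  subst hd
  intro m
  induction m with
  | zero =>
    ext i j
    fin_cases i <;> fin_cases j <;> simp <;>
      first
        | linear_combination hpi
        | linear_combination -hpi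
  | succ m ih =>
    rw [pow_succ, ih, Matrix.mul_fin_two]
    ext i j
    fin_cases i <;> fin_cases j <;> simp <;>
      first
        | linear_combination hpi
        | linear_combination -hpi
        | linear_combination ((p11-p01)^(m+1)) * hpi
        | linear_combination (-(p11-p01)^(m+1)) * hpi
        | linear_combination (1-(p11-p01)^(m+1)) * hpi
        | linear_combination (-(1-(p11-p01)^(m+1))) * hpi
        | linear_combination ((p11-p01)^m) * hpi
        | linear_combination (-(p11-p01)^m) * hpi
        | linear_combination ((p11-p01)^m*(p11-p01-1)) * hpi
        | linear_combination ((p11-p01)^m*(1-p11+p01)) * hpi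

/-- Throughput of the myopic policy for two channels, case `p11 ≥ p01`: the explicit
sequence `λ` is a probability distribution on the positive integers, is stationary for the
transmission-period-length Markov chain with transition probabilities `r`, has mean
`1 + ω̄/(1−p11)`, and yields steady-state throughput
`U = 1 − 1/L̄ = 1 − (1−p11)/(1+ω̄−p11)`. -/
theorem myopic_throughput_two_channels_pos
    (p01 p11 p10 p00 : ℝ)
    (h0 : 0 ≤ p01) (h01 : p01 ≤ p11) (h1 : p11 < 1)
    (hp10 : p10 = 1 - p11) (hp00 : p00 = 1 - p01)
    (P : Matrix (Fin 2) (Fin 2) ℝ)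
    (hP : P = !![1 - p01, p01; 1 - p11, p11])
    (r : ℕ → ℕ → ℝ)
    (hr1 : ∀ i, 1 ≤ i → r i 1 = 1 - (P ^ (i + 1)) 0 1)
    (hr2 : ∀ i, 1 ≤ i → ∀ j, 2 ≤ j → r i j = (P ^ (i + 1)) 0 1 * p11 ^ (j - 2) * p10)
    (p01two A ωbar : ℝ)
    (hp01two : p01two = p00 * p01 + p01 * p11)
    (hA : A = p01 / (1 + p01 - p11) *
      (1 - (p11 - p01) ^ 3 * (1 - p11) / (1 - p11 ^ 2 + p11 * p01)))
    (hωbar : ωbar = p01two / (1 + p01two - A))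
    (lam : ℕ → ℝ)
    (hlam1 : lam 1 = 1 - ωbar)
    (hlam2 : ∀ k, 2 ≤ k → lam k = ωbar * p11 ^ (k - 2) * p10) :
    (∀ k, 1 ≤ k → 0 ≤ lam k) ∧
    (∑' k : ℕ, lam (k + 1)) = 1 ∧
    (∀ j, 1 ≤ j → (∑' i : ℕ, lam (i + 1) * r (i + 1) j) = lam j) ∧
    (∑' k : ℕ, ((k : ℝ) + 1) * lam (k + 1)) = 1 + ωbar / (1 - p11) ∧
    1 - 1 / (∑' k : ℕ, ((k : ℝ) + 1) * lam (k + 1)) =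
      1 - (1 - p11) / (1 + ωbar - p11) := by
  have hp11nn : (0:ℝ) ≤ p11 := le_trans h0 h01
  obtain ⟨d, hd⟩ : ∃ x : ℝ, x = p11 - p01 := ⟨_, rfl⟩
  have hd0 : 0 ≤ d := by rw [hd]; linarith
  have hd1 : d < 1 := by rw [hd]; linarith
  have h1d : (0:ℝ) < 1 - d := by linarith
  have h1p11 : (0:ℝ) < 1 - p11 := by linarith
  have hpdnn : 0 ≤ p11 * d := mul_nonneg hp11nn hd0
  have hpd : p11 * d < 1 := lt_of_le_of_lt (by nlinarith) h1
  have h1pd : (0:ℝ) < 1 - p11 * d := by linarith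
  obtain ⟨pi1, hpi1def⟩ : ∃ x : ℝ, x = p01 / (1 - d) := ⟨_, rfl⟩
  have hpi : pi1 * (1 - d) = p01 := by
    rw [hpi1def]; field_simp
  have hpi1nn : 0 ≤ pi1 := hpi1def ▸ div_nonneg h0 h1d.le
  -- entry formula
  have hq : ∀ m : ℕ, (P ^ (m + 1)) 0 1 = pi1 * (1 - d ^ (m + 1)) := by
    intro m
    rw [hP, pow_entry_myopic p01 p11 d pi1 hd hpi m]
    simp
  -- rewrite A
  have hA' : A = pi1 * (1 - d ^ 3 * (1 - p11) / (1 - p11 * d)) := by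
    rw [hA, ← hd, show 1 + p01 - p11 = 1 - d by rw [hd]; ring,
      show 1 - p11 ^ 2 + p11 * p01 = 1 - p11 * d by rw [hd]; ring, ← hpi1def]
  have hFnn : 0 ≤ d ^ 3 * (1 - p11) / (1 - p11 * d) :=
    div_nonneg (mul_nonneg (pow_nonneg hd0 3) h1p11.le) h1pd.le
  have hFle : d ^ 3 * (1 - p11) / (1 - p11 * d) ≤ 1 := by
    rw [div_le_one h1pd]
    nlinarith [pow_le_one₀ hd0 hd1.le (n := 3)]
  have hA0 : 0 ≤ A := by
    rw [hA']; exact mul_nonneg hpi1nn (by linarith)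
  have hA1 : A < 1 := by
    rcases eq_or_lt_of_le h0 with h | h
    · rw [hA', hpi1def, ← h]; norm_num
    · have hpi1lt : pi1 < 1 := by
        rw [hpi1def, div_lt_one h1d, hd]; linarith
      rw [hA']
      nlinarith
  have hq2 : p01two = pi1 * (1 - d ^ 2) := by
    rw [hp01two, hp00]
    linear_combination (-(1:ℝ) - d) * hpi - p01 * hd
  have hq2nn : 0 ≤ p01two := by
    rw [hq2]
    exact mul_nonneg hpi1nn (by nlinarith [pow_le_one₀ hd0 hd1.le (n := 2), pow_nonneg hd0 2])
  have hden : (0:ℝ) < 1 + p01two - A := by linarith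
  have hw : ωbar * (1 + p01two - A) = p01two := by
    rw [hωbar]; field_simp
  have hw0 : 0 ≤ ωbar := by
    rw [hωbar]; exact div_nonneg hq2nn hden.le
  have hw1 : ωbar ≤ 1 := by
    rw [hωbar, div_le_one hden]; linarith
  have hp10nn : 0 ≤ p10 := by rw [hp10]; linarith
  -- the tail formula
  have e2 : ∀ k : ℕ, lam (k + 1 + 1) = (ωbar * p10) * p11 ^ k := by
    intro k
    have hk : k + 1 + 1 - 2 = k := rfl
    rw [hlam2 (k + 1 + 1) (by omega), hk]; ring
  have hgeo : Summable fun k : ℕ => p11 ^ k := summable_geometric_of_lt_one hp11nn h1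
  have hgeot : ∑' k : ℕ, p11 ^ k = (1 - p11)⁻¹ := tsum_geometric_of_lt_one hp11nn h1
  have hsum2 : Summable fun k : ℕ => lam (k + 1 + 1) := by
    exact (hgeo.mul_left (ωbar * p10)).congr fun k => (e2 k).symm
  have hsum1 : Summable fun k : ℕ => lam (k + 1) :=
    (summable_nat_add_iff 1).mp hsum2
  have htail : ∑' k : ℕ, lam (k + 1 + 1) = ωbar * p10 * (1 - p11)⁻¹ := by
    rw [tsum_congr e2, tsum_mul_left, hgeot]
  have htot : (∑' k : ℕ, lam (k + 1)) = 1 := by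
    rw [← Summable.sum_add_tsum_nat_add 1 hsum1, htail, Finset.sum_range_one, hlam1, hp10]
    field_simp
    ring
  -- the weighted sum ∑ λ_{i+1} q_{i+2}
  have e3 : ∀ n : ℕ, lam (n + 1 + 1) * d ^ (n + 1 + 2) = (ωbar * p10 * d ^ 3) * (p11 * d) ^ n := by
    intro n; rw [e2 n]; ring
  have hsumv2 : Summable fun n : ℕ => lam (n + 1 + 1) * d ^ (n + 1 + 2) :=
    ((summable_geometric_of_lt_one hpdnn hpd).mul_left (ωbar * p10 * d ^ 3)).congr
      fun n => (e3 n).symm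
  have hsumv : Summable fun i : ℕ => lam (i + 1) * d ^ (i + 2) :=
    (summable_nat_add_iff 1).mp hsumv2
  have hTv : ∑' i : ℕ, lam (i + 1) * d ^ (i + 2)
      = (1 - ωbar) * d ^ 2 + (ωbar * p10 * d ^ 3) * (1 - p11 * d)⁻¹ := by
    rw [← Summable.sum_add_tsum_nat_add 1 hsumv, Finset.sum_range_one, tsum_congr e3, tsum_mul_left,
      tsum_geometric_of_lt_one hpdnn hpd, hlam1]
    try ring
  -- key algebraic identity
  have hA2 : A * (1 - p11 * d) = pi1 * (1 - p11 * d) - pi1 * d ^ 3 * (1 - p11) := by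
    rw [hA', mul_assoc, sub_mul, one_mul, div_mul_cancel₀ _ h1pd.ne']
    try ring
  have hE1 : ωbar * (1 + pi1 * (1 - d ^ 2) - A) = pi1 * (1 - d ^ 2) := by
    rw [← hq2]; exact hw
  have hkey : pi1 * ((1 - p11 * d) - (1 - ωbar) * d ^ 2 * (1 - p11 * d)
      - ωbar * (1 - p11) * d ^ 3) = ωbar * (1 - p11 * d) := by
    linear_combination (-(1 - p11 * d)) * hE1 - ωbar * hA2
  have hsumw : Summable fun i : ℕ => lam (i + 1) * (pi1 * (1 - d ^ (i + 1 + 1))) := by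
    refine ((hsum1.mul_left pi1).sub (hsumv.mul_left pi1)).congr fun i => ?_
    ring
  have hS : ∑' i : ℕ, lam (i + 1) * (pi1 * (1 - d ^ (i + 1 + 1))) = ωbar := by
    have h1' : ∑' i : ℕ, lam (i + 1) * (pi1 * (1 - d ^ (i + 1 + 1)))
        = ∑' i : ℕ, (pi1 * lam (i + 1) - pi1 * (lam (i + 1) * d ^ (i + 2))) :=
      tsum_congr fun i => by ring
    rw [h1', Summable.tsum_sub (hsum1.mul_left pi1) (hsumv.mul_left pi1),
      tsum_mul_left, tsum_mul_left, htot, hTv, hp10, mul_one]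
    have hXne : (1 - p11 * d) ≠ 0 := ne_of_gt h1pd
    have hinv : (1 - p11 * d) * (1 - p11 * d)⁻¹ = 1 := mul_inv_cancel₀ hXne
    linear_combination (1 - p11 * d)⁻¹ * hkey - (pi1 - pi1 * (1 - ωbar) * d ^ 2 - ωbar) * hinv
  -- mean
  have hnorm : ‖p11‖ < 1 := by rw [Real.norm_eq_abs, abs_of_nonneg hp11nn]; exact h1
  have hs_npow : Summable fun n : ℕ => (n : ℝ) * p11 ^ n := by
    simpa using summable_pow_mul_geometric_of_norm_lt_one 1 hnorm
  have hS2 : Summable fun n : ℕ => ((n : ℝ) + 2) * ((ωbar * p10) * p11 ^ n) := by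
    refine ((hs_npow.mul_left (ωbar * p10)).add ((hgeo.mul_left (2 * (ωbar * p10))))).congr
      fun n => ?_
    ring
  have hsumM2 : Summable fun n : ℕ => (((n : ℕ) + 1 : ℕ) + 1 : ℝ) * lam (n + 1 + 1) := by
    refine hS2.congr fun n => ?_
    rw [e2 n]; push_cast; ring
  have hsumM : Summable fun k : ℕ => ((k : ℝ) + 1) * lam (k + 1) := by
    refine (summable_nat_add_iff 1).mp (hsumM2.congr fun n => ?_)
    push_cast; ring
  have hT2 : ∑' n : ℕ, (((n : ℕ) + 1 : ℕ) + 1 : ℝ) * lam (n + 1 + 1)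
      = (ωbar * p10) * (p11 / (1 - p11) ^ 2) + 2 * (ωbar * p10) * (1 - p11)⁻¹ := by
    have h3 : ∑' n : ℕ, (((n : ℕ) + 1 : ℕ) + 1 : ℝ) * lam (n + 1 + 1)
        = ∑' n : ℕ, ((ωbar * p10) * ((n : ℝ) * p11 ^ n) + (2 * (ωbar * p10)) * p11 ^ n) :=
      tsum_congr fun n => by rw [e2 n]; push_cast; ring
    rw [h3, Summable.tsum_add (hs_npow.mul_left _) (hgeo.mul_left _), tsum_mul_left, tsum_mul_left,
      tsum_coe_mul_geometric_of_norm_lt_one hnorm, hgeot]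
  have hM : (∑' k : ℕ, ((k : ℝ) + 1) * lam (k + 1)) = 1 + ωbar / (1 - p11) := by
    rw [← Summable.sum_add_tsum_nat_add 1 hsumM, Finset.sum_range_one, hT2, hlam1, hp10]
    push_cast
    field_simp
    ring
  -- assemble
  refine ⟨?_, htot, ?_, hM, ?_⟩
  · intro k hk
    rcases eq_or_lt_of_le hk with h | h
    · rw [← h, hlam1]; linarith
    · rw [hlam2 k (by omega)]
      exact mul_nonneg (mul_nonneg hw0 (pow_nonneg hp11nn _)) hp10nn
  · intro j hj
    by_cases hj2 : 2 ≤ j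
    · calc ∑' i : ℕ, lam (i + 1) * r (i + 1) j
          = ∑' i : ℕ, (lam (i + 1) * (pi1 * (1 - d ^ (i + 1 + 1)))) * (p11 ^ (j - 2) * p10) :=
            tsum_congr fun i => by
              rw [hr2 (i + 1) (by omega) j hj2, hq (i + 1)]; ring
        _ = ωbar * (p11 ^ (j - 2) * p10) := by rw [tsum_mul_right, hS]
        _ = lam j := by rw [hlam2 j hj2]; ring
    · have hj1 : j = 1 := by omega
      subst hj1
      calc ∑' i : ℕ, lam (i + 1) * r (i + 1) 1
          = ∑' i : ℕ, (lam (i + 1) - lam (i + 1) * (pi1 * (1 - d ^ (i + 1 + 1)))) :=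
            tsum_congr fun i => by
              rw [hr1 (i + 1) (by omega), hq (i + 1)]; ring
        _ = 1 - ωbar := by rw [Summable.tsum_sub hsum1 hsumw, htot, hS]
        _ = lam 1 := hlam1.symm
  · -- throughput
    have h2 : (0:ℝ) < 1 + ωbar - p11 := by linarith
    rw [hM, show (1:ℝ) + ωbar / (1 - p11) = (1 + ωbar - p11) / (1 - p11) by
      field_simp; try ring, one_div_div]
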